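/- Explicit Bogolubov integral: ∫₀^∞ ( 1 + x⁴ - x²√(2 + x⁴) ) dx = 2^{3/4} √π Γ(3/4) / (5 Γ(5/4)). -/

import Mathlib

open MeasureTheory Real

/-- Real Beta integral in terms of Gamma functions. -/
lemma bogolubov_real_beta (a b : ℝ) (ha : 0 < a) (hb : 0 < b) :
    ∫ s in Set.Ioo (0:ℝ) 1, s ^ (a - 1) * (1 - s) ^ (b - 1) =
      Real.Gamma a * Real.Gamma b / Real.Gamma (a + b) := by
  have h := Complex.Gamma_mul_Gamma_eq_betaIntegral (s := a) (t := b)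
    (by simpa using ha) (by simpa using hb)
  have hbeta : Complex.betaIntegral a b =
      ((∫ s in Set.Ioo (0:ℝ) 1, s ^ (a - 1) * (1 - s) ^ (b - 1) : ℝ) : ℂ) := by
    rw [Complex.betaIntegral, intervalIntegral.integral_of_le zero_le_one,
      ← MeasureTheory.integral_Ioc_eq_integral_Ioo]
    rw [show ((∫ t in Set.Ioc (0:ℝ) 1, t ^ (a-1) * (1-t) ^ (b-1) : ℝ) : ℂ) =
        ∫ t in Set.Ioc (0:ℝ) 1, ((t ^ (a-1) * (1-t) ^ (b-1) : ℝ) : ℂ) from integral_ofReal.symm]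
    refine setIntegral_congr_fun measurableSet_Ioc fun x hx => ?_
    rw [Complex.ofReal_mul, Complex.ofReal_cpow hx.1.le, Complex.ofReal_cpow (by linarith [hx.2])]
    push_cast
    ring_nf
  rw [hbeta, ← Complex.ofReal_add, Complex.Gamma_ofReal, Complex.Gamma_ofReal,
    Complex.Gamma_ofReal, ← Complex.ofReal_mul, ← Complex.ofReal_mul] at h
  have hG : Real.Gamma (a + b) ≠ 0 := (Real.Gamma_pos_of_pos (by linarith)).ne'
  have := Complex.ofReal_injective h
  field_simp
  linarith [this]

/-- Beta-type integrand is integrable on `(0,1)`. -/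
lemma bogolubov_beta_integrable (a b : ℝ) (ha : 0 < a) (hb : 0 < b) :
    IntegrableOn (fun s : ℝ => s ^ (a-1) * (1-s) ^ (b-1)) (Set.Ioo 0 1) := by
  have h := (Complex.betaIntegral_convergent (u := a) (v := b)
    (by simpa using ha) (by simpa using hb)).norm
  rw [intervalIntegrable_iff_integrableOn_Ioo_of_le zero_le_one] at h
  refine h.congr_fun (fun x hx => ?_) measurableSet_Ioo
  have hx0 : (0:ℝ) ≤ x := hx.1.le
  have hx1 : (0:ℝ) ≤ 1 - x := by linarith [hx.2]
  beta_reduce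
  rw [show ((x:ℂ) ^ ((a:ℂ) - 1)) = (((x ^ (a-1) : ℝ)) : ℂ) by
      rw [Complex.ofReal_cpow hx0]; push_cast; ring_nf,
    show ((1 - (x:ℂ)) ^ ((b:ℂ) - 1)) = (((1 - x) ^ (b-1) : ℝ) : ℂ) by
      rw [Complex.ofReal_cpow hx1]; push_cast; ring_nf]
  rw [← Complex.ofReal_mul, Complex.norm_real]
  exact Real.norm_of_nonneg (by positivity)

/-- Substitution map `(0,1) → (0,∞)` for the Bogolubov integral. -/
noncomputable def bogoPhi (s : ℝ) : ℝ :=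
  2 ^ (-(1:ℝ)/4) * s ^ (-(1:ℝ)/4) * (1 - s) ^ ((1:ℝ)/2)

/-- Its derivative. -/
noncomputable def bogoPhi' (s : ℝ) : ℝ :=
  -(2 ^ (-(9:ℝ)/4) * (1 + s) * s ^ (-(5:ℝ)/4) * (1 - s) ^ (-(1:ℝ)/2))

lemma bogoPhi_hasDerivAt {s : ℝ} (hs : s ∈ Set.Ioo (0:ℝ) 1) :
    HasDerivAt bogoPhi (bogoPhi' s) s := by
  obtain ⟨hs0, hs1⟩ := hs
  have h1s : (0:ℝ) < 1 - s := by linarith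
  have h1 : HasDerivAt (fun t : ℝ => t ^ (-(1:ℝ)/4)) ((-(1:ℝ)/4) * s ^ (-(1:ℝ)/4 - 1)) s :=
    Real.hasDerivAt_rpow_const (Or.inl hs0.ne')
  have h2 : HasDerivAt (fun t : ℝ => (1 - t) ^ ((1:ℝ)/2))
      (((1:ℝ)/2) * (1 - s) ^ ((1:ℝ)/2 - 1) * (-1)) s :=
    (Real.hasDerivAt_rpow_const (Or.inl h1s.ne')).comp s ((hasDerivAt_id s).const_sub 1)
  have h3 := ((h1.mul h2).const_mul ((2:ℝ) ^ (-(1:ℝ)/4)))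
  convert h3 using 1
  case e'_8 => funext y; simp only [bogoPhi, Pi.mul_apply]; ring
  case e'_4 => rfl
  case e'_5 => rfl
  have e1 : s ^ (-(1:ℝ)/4) = s ^ (-(1:ℝ)/4 - 1) * s := by
    rw [← Real.rpow_add_one hs0.ne']; norm_num
  have e2 : (1 - s) ^ ((1:ℝ)/2) = (1 - s) ^ ((1:ℝ)/2 - 1) * (1 - s) := by
    rw [← Real.rpow_add_one h1s.ne']; norm_num
  have e3 : (2:ℝ) ^ (-(1:ℝ)/4) = 2 ^ (-(9:ℝ)/4) * 4 := by
    rw [show (4:ℝ) = (2:ℝ) ^ (2:ℝ) by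
      rw [show (2:ℝ) = ((2:ℕ):ℝ) by norm_num, Real.rpow_natCast]; norm_num,
      ← Real.rpow_add two_pos]
    norm_num
  have e4 : s ^ (-(5:ℝ)/4) = s ^ (-(1:ℝ)/4 - 1) := by norm_num
  have e5 : (1 - s) ^ (-(1:ℝ)/2) = (1 - s) ^ ((1:ℝ)/2 - 1) := by norm_num
  simp only [bogoPhi']
  rw [e4, e5, e3]
  nth_rewrite 1 [e1]
  rw [e2]
  ring

lemma bogoPhi_pos {s : ℝ} (hs : s ∈ Set.Ioo (0:ℝ) 1) : 0 < bogoPhi s := by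
  obtain ⟨hs0, hs1⟩ := hs
  have h1s : (0:ℝ) < 1 - s := by linarith
  unfold bogoPhi
  positivity

lemma bogoPhi'_neg {s : ℝ} (hs : s ∈ Set.Ioo (0:ℝ) 1) : bogoPhi' s < 0 := by
  obtain ⟨hs0, hs1⟩ := hs
  have h1s : (0:ℝ) < 1 - s := by linarith
  have : 0 < 2 ^ (-(9:ℝ)/4) * (1 + s) * s ^ (-(5:ℝ)/4) * (1 - s) ^ (-(1:ℝ)/2) := by
    have h1 : (0:ℝ) < 1 + s := by linarith
    positivity
  simp only [bogoPhi']
  linarith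

lemma bogoPhi_injOn : Set.InjOn bogoPhi (Set.Ioo 0 1) := by
  have : StrictAntiOn bogoPhi (Set.Ioo 0 1) := by
    apply strictAntiOn_of_deriv_neg (convex_Ioo 0 1)
    · exact fun s hs => (bogoPhi_hasDerivAt hs).continuousAt.continuousWithinAt
    · intro s hs
      rw [interior_Ioo] at hs
      rw [(bogoPhi_hasDerivAt hs).deriv]
      exact bogoPhi'_neg hs
  exact this.injOn

lemma bogoPhi_pow4 {s : ℝ} (hs0 : 0 < s) (hs1 : s < 1) :
    bogoPhi s ^ 4 = (1 - s)^2 / (2*s) := by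
  have h14 : ((1:ℝ)/2) * ((4:ℕ):ℝ) = ((2:ℕ):ℝ) := by norm_num
  have hA : ((2:ℝ) ^ (-(1:ℝ)/4)) ^ (4:ℕ) = 2⁻¹ := by
    rw [← Real.rpow_natCast ((2:ℝ) ^ (-(1:ℝ)/4)) 4,
      ← Real.rpow_mul (by norm_num : (0:ℝ) ≤ 2)]
    norm_num [Real.rpow_neg_one]
  have hB : (s ^ (-(1:ℝ)/4)) ^ (4:ℕ) = s⁻¹ := by
    rw [← Real.rpow_natCast (s ^ (-(1:ℝ)/4)) 4, ← Real.rpow_mul hs0.le]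
    norm_num [Real.rpow_neg_one]
  have hC : ((1 - s) ^ ((1:ℝ)/2)) ^ (4:ℕ) = (1 - s)^2 := by
    rw [← Real.rpow_natCast ((1-s) ^ ((1:ℝ)/2)) 4,
      ← Real.rpow_mul (by linarith : (0:ℝ) ≤ 1 - s), h14, Real.rpow_natCast]
  unfold bogoPhi
  rw [mul_pow, mul_pow, hA, hB, hC]
  field_simp

lemma bogoPhi_image : bogoPhi '' Set.Ioo 0 1 = Set.Ioi 0 := by
  apply Set.eq_of_subset_of_subset
  · rintro x ⟨s, hs, rfl⟩
    exact bogoPhi_pos hs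
  · intro y hy
    rw [Set.mem_Ioi] at hy
    set u : ℝ := Real.sqrt (2 + y^4) - y^2 with hu
    have hsq : Real.sqrt (2 + y^4) ^ 2 = 2 + y^4 := Real.sq_sqrt (by positivity)
    have hy2lt : y^2 < Real.sqrt (2 + y^4) := by
      have h : y^2 = Real.sqrt (y^4) := by
        rw [show y^4 = (y^2)^2 by ring, Real.sqrt_sq (by positivity)]
      rw [h]
      exact Real.sqrt_lt_sqrt (by positivity) (by linarith)
    have hupos : 0 < u := by simp [hu]; linarith
    set s : ℝ := u^2/2 with hs
    have h2s : 2 * s = u^2 := by rw [hs]; ring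
    have hs0 : 0 < s := by positivity
    have h1s : 1 - s = y^2 * u := by
      rw [hs, hu]; nlinarith [hsq]
    have hs1 : s < 1 := by nlinarith [hupos, sq_nonneg y]
    refine ⟨s, ⟨hs0, hs1⟩, ?_⟩
    have key : (1 - s)^2 / (2 * s) = y^4 := by
      rw [h1s, h2s]; field_simp
    have hy4 : bogoPhi s ^ 4 = y ^ 4 := by rw [bogoPhi_pow4 hs0 hs1, key]
    exact (pow_left_inj₀ (bogoPhi_pos ⟨hs0, hs1⟩).le hy.le (by norm_num)).mp hy4

lemma bogolubov_g_of_x4 {x s : ℝ} (hx : 0 ≤ x) (hs0 : 0 < s) (hs1 : s < 1)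
    (hx4 : x ^ 4 = (1 - s)^2 / (2*s)) :
    1 + x ^ 4 - x ^ 2 * Real.sqrt (2 + x ^ 4) = s := by
  have h1s : (0:ℝ) < 1 - s := by linarith
  have h2s : (0:ℝ) < 2 * s := by linarith
  have hsq : Real.sqrt (2*s) ^ 2 = 2*s := Real.sq_sqrt h2s.le
  have hsqpos : 0 < Real.sqrt (2*s) := Real.sqrt_pos.mpr h2s
  have hx2 : x ^ 2 = (1 - s) / Real.sqrt (2*s) := by
    have h1 : x ^ 2 = Real.sqrt (x ^ 4) := by
      rw [show x^4 = (x^2)^2 by ring, Real.sqrt_sq (by positivity)]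
    rw [h1, hx4, Real.sqrt_div (by positivity) (2*s), Real.sqrt_sq h1s.le]
  have hS : Real.sqrt (2 + x ^ 4) = (1 + s) / Real.sqrt (2*s) := by
    have h2 : 2 + x ^ 4 = ((1 + s) / Real.sqrt (2*s))^2 := by
      rw [hx4, div_pow, hsq]
      field_simp
      ring
    rw [h2, Real.sqrt_sq (by positivity)]
  rw [hx2, hS, hx4]
  field_simp
  have h2' : Real.sqrt 2 * Real.sqrt 2 = 2 := Real.mul_self_sqrt (by norm_num)
  have hs' : Real.sqrt s * Real.sqrt s = s := Real.mul_self_sqrt hs0.le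
  have hprod : Real.sqrt 2 * Real.sqrt s * (Real.sqrt 2 * Real.sqrt s) = 2*s := by
    rw [mul_mul_mul_comm, h2', hs']
  linear_combination (1 - s^2) * (Real.sq_sqrt (by positivity) : Real.sqrt (s*2) ^ 2 = s*2)

/-- **Explicit Bogolubov integral.**
`∫₀^∞ (1 + x⁴ - x²√(2 + x⁴)) dx = 2^{3/4} √π Γ(3/4) / (5 Γ(5/4))`. -/
theorem bogolubov_integral :
    ∫ x in Set.Ioi (0 : ℝ), (1 + x ^ 4 - x ^ 2 * Real.sqrt (2 + x ^ 4)) =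
      (2 : ℝ) ^ ((3 : ℝ) / 4) * Real.sqrt π * Real.Gamma (3 / 4) /
        (5 * Real.Gamma (5 / 4)) := by
  have hsub := integral_image_eq_integral_abs_deriv_smul measurableSet_Ioo
    (fun s hs => (bogoPhi_hasDerivAt hs).hasDerivWithinAt) bogoPhi_injOn
    (fun x : ℝ => 1 + x ^ 4 - x ^ 2 * Real.sqrt (2 + x ^ 4))
  rw [bogoPhi_image] at hsub
  rw [hsub]
  have hcong : ∀ s ∈ Set.Ioo (0:ℝ) 1,
      |bogoPhi' s| • (1 + bogoPhi s ^ 4 - bogoPhi s ^ 2 * Real.sqrt (2 + bogoPhi s ^ 4)) =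
      2 ^ (-(9:ℝ)/4) * (s ^ ((3:ℝ)/4 - 1) * (1-s) ^ ((1:ℝ)/2 - 1)
        + s ^ ((7:ℝ)/4 - 1) * (1-s) ^ ((1:ℝ)/2 - 1)) := by
    intro s hs
    obtain ⟨hs0, hs1⟩ := hs
    rw [bogolubov_g_of_x4 (bogoPhi_pos ⟨hs0, hs1⟩).le hs0 hs1 (bogoPhi_pow4 hs0 hs1),
      smul_eq_mul, abs_of_neg (bogoPhi'_neg ⟨hs0, hs1⟩)]
    simp only [bogoPhi']
    rw [neg_neg]
    have e3 : (3:ℝ)/4 - 1 = -(1:ℝ)/4 := by norm_num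
    have e4 : (7:ℝ)/4 - 1 = (3:ℝ)/4 := by norm_num
    have e5 : (1:ℝ)/2 - 1 = -(1:ℝ)/2 := by norm_num
    rw [e3, e4, e5]
    have e2 : s ^ ((3:ℝ)/4) = s ^ (-(1:ℝ)/4) * s := by
      rw [← Real.rpow_add_one hs0.ne']; norm_num
    have e1 : s ^ (-(1:ℝ)/4) = s ^ (-(5:ℝ)/4) * s := by
      rw [← Real.rpow_add_one hs0.ne']; norm_num
    rw [e2, e1]
    ring
  rw [setIntegral_congr_fun measurableSet_Ioo hcong, integral_const_mul,
    integral_add (bogolubov_beta_integrable (3/4) (1/2) (by norm_num) (by norm_num))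
      (bogolubov_beta_integrable (7/4) (1/2) (by norm_num) (by norm_num)),
    bogolubov_real_beta (3/4) (1/2) (by norm_num) (by norm_num),
    bogolubov_real_beta (7/4) (1/2) (by norm_num) (by norm_num)]
  rw [show (3:ℝ)/4 + 1/2 = 5/4 by norm_num, show (7:ℝ)/4 + 1/2 = 9/4 by norm_num,
    Real.Gamma_one_half_eq,
    show Real.Gamma ((9:ℝ)/4) = (5/4) * Real.Gamma (5/4) by
      rw [show (9:ℝ)/4 = 5/4 + 1 by norm_num, Real.Gamma_add_one (by norm_num)],
    show Real.Gamma ((7:ℝ)/4) = (3/4) * Real.Gamma (3/4) by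
      rw [show (7:ℝ)/4 = 3/4 + 1 by norm_num, Real.Gamma_add_one (by norm_num)]]
  have hpos : 0 < Real.Gamma (5/4) := Real.Gamma_pos_of_pos (by norm_num)
  have h2 : (2:ℝ) ^ (-(9:ℝ)/4) * 8 = 2 ^ ((3:ℝ)/4) := by
    rw [show (8:ℝ) = (2:ℝ) ^ (3:ℝ) by
      rw [show (2:ℝ) = ((2:ℕ):ℝ) by norm_num, show (3:ℝ) = ((3:ℕ):ℝ) by norm_num,
        Real.rpow_natCast]; norm_num,
      ← Real.rpow_add two_pos]
    norm_num
  field_simp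
  rw [neg_div] at h2
  linear_combination h2
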